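/- Let (s_α)_{α>0} be a family of proper, convex, lower semicontinuous functions s_α : ℝ → [0,∞] with s_α(0) = 0, and suppose that for every y ∈ ℝ one has prox_{s_α}(y) → y as α → 0. Then for every y ∈ ℝ, s_α(y) → 0 as α → 0. -/

import Mathlib

open scoped ENNReal
open Filter

noncomputable section

/-- `p` is the (unique) proximal point at `x` of the `[0,∞]`-valued functional `s`. -/
def IsProxPtE (s : ℝ → ℝ≥0∞) (x p : ℝ) : Prop :=
  (∀ y : ℝ, ENNReal.ofReal ((x - p) ^ 2 / 2) + s p ≤ ENNReal.ofReal ((x - y) ^ 2 / 2) + s y) ∧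
  ∀ q : ℝ, (∀ y : ℝ, ENNReal.ofReal ((x - q) ^ 2 / 2) + s q ≤
    ENNReal.ofReal ((x - y) ^ 2 / 2) + s y) → q = p

/-- Convexity for `[0,∞]`-valued functions on `ℝ`. -/
def ENNConvexOn (s : ℝ → ℝ≥0∞) : Prop :=
  ∀ x y : ℝ, ∀ a b : ℝ, 0 ≤ a → 0 ≤ b → a + b = 1 →
    s (a * x + b * y) ≤ ENNReal.ofReal a * s x + ENNReal.ofReal b * s y

/-- Convexity with `s 0 = 0` gives monotonicity along rays from the origin. -/
lemma scale_le_aux (s : ℝ → ℝ≥0∞) (hconv : ENNConvexOn s) (hs0 : s 0 = 0)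
    (c z : ℝ) (hc0 : 0 ≤ c) (hc1 : c ≤ 1) : s (c * z) ≤ s z := by
  have h := hconv z 0 c (1 - c) hc0 (by linarith) (by ring)
  simp only [mul_zero, hs0, add_zero] at h
  calc s (c * z) ≤ ENNReal.ofReal c * s z := h
    _ ≤ 1 * s z := by
        gcongr
        exact ENNReal.ofReal_le_one.mpr hc1
    _ = s z := one_mul _

/-- Subgradient-type bound at the prox point. -/
lemma key_bound (s : ℝ → ℝ≥0∞) (hconv : ENNConvexOn s) (hs0 : s 0 = 0) (x pt : ℝ)
    (hprox : ∀ y : ℝ, ENNReal.ofReal ((x - pt) ^ 2 / 2) + s pt ≤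
      ENNReal.ofReal ((x - y) ^ 2 / 2) + s y) :
    s pt ≤ ENNReal.ofReal (pt * (x - pt)) := by
  -- finiteness of s pt
  have hfin : s pt ≤ ENNReal.ofReal (x ^ 2 / 2) := by
    have h0 := hprox 0
    simp only [hs0, add_zero, sub_zero] at h0
    calc s pt ≤ ENNReal.ofReal ((x - pt) ^ 2 / 2) + s pt := le_add_self
      _ ≤ ENNReal.ofReal (x ^ 2 / 2) := h0
  have hne : s pt ≠ ⊤ := ne_top_of_le_ne_top ENNReal.ofReal_ne_top hfin
  set S : ℝ := (s pt).toReal with hS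
  have hSrepr : s pt = ENNReal.ofReal S := (ENNReal.ofReal_toReal hne).symm
  have hS0 : 0 ≤ S := ENNReal.toReal_nonneg
  -- for each t in (0,1], S ≤ pt*(x-pt) + t*pt^2/2
  have hstep : ∀ t : ℝ, 0 < t → t ≤ 1 → S ≤ pt * (x - pt) + t * pt ^ 2 / 2 := by
    intro t ht0 ht1
    have hcv := hconv pt 0 (1 - t) t (by linarith) (le_of_lt ht0) (by ring)
    simp only [mul_zero, hs0, add_zero] at hcv
    have hcv' : s ((1 - t) * pt) ≤ ENNReal.ofReal ((1 - t) * S) := by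
      calc s ((1 - t) * pt) ≤ ENNReal.ofReal (1 - t) * s pt := hcv
        _ = ENNReal.ofReal ((1 - t) * S) := by
            rw [hSrepr, ← ENNReal.ofReal_mul (by linarith)]
    have hpr := hprox ((1 - t) * pt)
    have hchain : ENNReal.ofReal ((x - pt) ^ 2 / 2 + S) ≤
        ENNReal.ofReal ((x - (1 - t) * pt) ^ 2 / 2 + (1 - t) * S) := by
      rw [ENNReal.ofReal_add (by positivity) hS0,
        ENNReal.ofReal_add (by positivity) (by nlinarith)]
      calc ENNReal.ofReal ((x - pt) ^ 2 / 2) + ENNReal.ofReal S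
          = ENNReal.ofReal ((x - pt) ^ 2 / 2) + s pt := by rw [hSrepr]
        _ ≤ ENNReal.ofReal ((x - (1 - t) * pt) ^ 2 / 2) + s ((1 - t) * pt) := hpr
        _ ≤ _ := by gcongr
    have hreal : (x - pt) ^ 2 / 2 + S ≤ (x - (1 - t) * pt) ^ 2 / 2 + (1 - t) * S :=
      (ENNReal.ofReal_le_ofReal_iff (by nlinarith)).mp hchain
    nlinarith [sq_nonneg pt, sq_nonneg (x - pt)]
  have hSle : S ≤ pt * (x - pt) := by
    refine le_of_forall_pos_le_add ?_
    intro ε hε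
    rcases eq_or_ne pt 0 with h | h
    · have := hstep 1 one_pos le_rfl
      simp [h] at this ⊢
      linarith
    · have hpt2 : 0 < pt ^ 2 := by positivity
      set t : ℝ := min 1 (2 * ε / pt ^ 2) with htdef
      have ht0 : 0 < t := lt_min one_pos (by positivity)
      have ht1 : t ≤ 1 := min_le_left _ _
      have h2 : t ≤ 2 * ε / pt ^ 2 := min_le_right _ _
      have := hstep t ht0 ht1
      have htb : t * pt ^ 2 / 2 ≤ ε := by
        rw [le_div_iff₀ hpt2] at h2
        linarith
      linarith
  rw [hSrepr]
  exact ENNReal.ofReal_le_ofReal hSle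

/-- If `(s_α)_{α>0}` are proper convex lsc `[0,∞]`-valued functionals with
`s_α(0) = 0` whose proximity operators converge pointwise to the identity as `α → 0`, then
`s_α → 0` pointwise as `α → 0`. -/
theorem statement14 (s : ℝ → ℝ → ℝ≥0∞)
    (hproper : ∀ α > (0 : ℝ), ∃ x, s α x ≠ ⊤)
    (hconv : ∀ α > (0 : ℝ), ENNConvexOn (s α))
    (hlsc : ∀ α > (0 : ℝ), LowerSemicontinuous (s α))
    (hs0 : ∀ α > (0 : ℝ), s α 0 = 0)
    (p : ℝ → ℝ → ℝ) (hp : ∀ α > (0 : ℝ), ∀ y : ℝ, IsProxPtE (s α) y (p α y))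
    (hpconv : ∀ y : ℝ, Tendsto (fun α => p α y) (nhdsWithin 0 (Set.Ioi 0)) (nhds y)) :
    ∀ y : ℝ, Tendsto (fun α => s α y) (nhdsWithin 0 (Set.Ioi 0)) (nhds 0) := by
  intro y
  have hmem : ∀ᶠ α in nhdsWithin (0:ℝ) (Set.Ioi 0), α ∈ Set.Ioi (0:ℝ) :=
    eventually_mem_nhdsWithin
  by_cases hy : y = 0
  · subst hy
    refine Tendsto.congr' ?_ tendsto_const_nhds
    filter_upwards [hmem] with α hα
    exact (hs0 α hα).symm
  · -- y ≠ 0; use the prox at 2y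
    have h2y := hpconv (2 * y)
    set P : ℝ → ℝ := fun α => p α (2 * y) with hP
    -- upper bound function
    have hub : Tendsto (fun α => ENNReal.ofReal (P α * (2 * y - P α)))
        (nhdsWithin 0 (Set.Ioi 0)) (nhds 0) := by
      have : Tendsto (fun α => P α * (2 * y - P α)) (nhdsWithin 0 (Set.Ioi 0))
          (nhds (2 * y * (2 * y - 2 * y))) := h2y.mul (tendsto_const_nhds.sub h2y)
      simp only [sub_self, mul_zero] at this
      have := (ENNReal.continuous_ofReal.tendsto 0).comp this
      simpa [Function.comp_def] using this
    -- eventual bound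
    have hclose : ∀ᶠ α in nhdsWithin (0:ℝ) (Set.Ioi 0), |P α - 2 * y| < |y| := by
      have := Metric.tendsto_nhds.mp h2y |y| (abs_pos.mpr hy)
      filter_upwards [this] with α hα
      rwa [Real.dist_eq] at hα
    have hbound : ∀ᶠ α in nhdsWithin (0:ℝ) (Set.Ioi 0),
        s α y ≤ ENNReal.ofReal (P α * (2 * y - P α)) := by
      filter_upwards [hmem, hclose] with α hα hcl
      have hα' : (0:ℝ) < α := hα
      have hprox := (hp α hα' (2 * y)).1
      have hkey := key_bound (s α) (hconv α hα') (hs0 α hα') (2 * y) (P α) hprox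
      -- show y = c * P α with c ∈ [0,1]
      have habs := abs_lt.mp hcl
      have hc : 0 ≤ y / P α ∧ y / P α ≤ 1 ∧ (y / P α) * P α = y := by
        rcases lt_or_gt_of_ne hy with hneg | hpos
        · -- y < 0 : P α < y < 0
          have hyabs : |y| = -y := abs_of_neg hneg
          have hPy : P α < y := by rw [hyabs] at habs; linarith [habs.2]
          have hPne : P α ≠ 0 := by linarith [hPy, hneg]
          have hPneg : P α < 0 := by linarith
          refine ⟨le_of_lt (div_pos_of_neg_of_neg hneg hPneg), ?_, ?_⟩
          · rw [← neg_div_neg_eq, div_le_one (by linarith)]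
            linarith
          · field_simp
        · -- y > 0 : 0 < y < P α
          have hyabs : |y| = y := abs_of_pos hpos
          have hPy : y < P α := by rw [hyabs] at habs; linarith [habs.1]
          have hPne : P α ≠ 0 := by linarith
          refine ⟨le_of_lt (div_pos hpos (by linarith)), ?_, ?_⟩
          · rw [div_le_one (by linarith)]; linarith
          · field_simp
      obtain ⟨hc0, hc1, hcy⟩ := hc
      calc s α y = s α ((y / P α) * P α) := by rw [hcy]
        _ ≤ s α (P α) := scale_le_aux (s α) (hconv α hα') (hs0 α hα') _ _ hc0 hc1
        _ ≤ ENNReal.ofReal (P α * (2 * y - P α)) := hkey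
    exact tendsto_of_tendsto_of_tendsto_of_le_of_le' tendsto_const_nhds hub
      (Eventually.of_forall fun α => zero_le) hbound
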